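/- Fix b ∈ ℝ and ω > 0. For every y ∈ ℝ² with y ≠ 0 and every η ∈ ℝ², the trajectory reaches the origin at some time if and only if the initial angular momentum vanishes: there exists t ∈ ℝ with x^t(y,η) = 0 if and only if y ∧ η = b, where u ∧ v := u₁v₂ − u₂v₁. -/

import Mathlib

/-- The Aharonov–Bohm vector potential with flux `b`:
`A(x) = (−b x₂/|x|², b x₁/|x|²)` for `x ∈ ℝ² \ {0}`. -/
noncomputable def A (b : ℝ) (x : ℝ × ℝ) : ℝ × ℝ :=
  (-b * x.2 / (x.1 ^ 2 + x.2 ^ 2), b * x.1 / (x.1 ^ 2 + x.2 ^ 2))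

/-- The wedge product `u ∧ v = u₁v₂ − u₂v₁` on `ℝ²`. -/
def wedge (u v : ℝ × ℝ) : ℝ := u.1 * v.2 - u.2 * v.1

/-- The Euclidean inner product on `ℝ²`. -/
def dot (u v : ℝ × ℝ) : ℝ := u.1 * v.1 + u.2 * v.2

/-- The squared Euclidean norm on `ℝ²`. -/
def normSq2 (u : ℝ × ℝ) : ℝ := u.1 ^ 2 + u.2 ^ 2

/-- The classical trajectory `x^t(y,η) = cos(ωt)·y + (sin(ωt)/ω)·(η − A(y))`. -/
noncomputable def traj (b ω : ℝ) (y η : ℝ × ℝ) (t : ℝ) : ℝ × ℝ :=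
  Real.cos (ω * t) • y + (Real.sin (ω * t) / ω) • (η - A b y)

/-- The trajectory reaches the origin at some time if and only if the initial
angular momentum vanishes: `∃ t, x^t(y,η) = 0 ↔ y ∧ η = b`. -/
theorem traj_hits_origin_iff (b ω : ℝ) (hω : 0 < ω)
    (y : ℝ × ℝ) (hy : y ≠ 0) (η : ℝ × ℝ) :
    (∃ t : ℝ, traj b ω y η t = 0) ↔ wedge y η = b := by
  have hy' : y.1 ≠ 0 ∨ y.2 ≠ 0 := by
    by_contra h
    push_neg at h
    exact hy (Prod.ext h.1 h.2)
  have hn : y.1 ^ 2 + y.2 ^ 2 ≠ 0 := by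
    rcases hy' with h | h <;> positivity
  constructor
  · rintro ⟨t, ht⟩
    set c := Real.cos (ω * t) with hc
    set s := Real.sin (ω * t) with hs
    have h1 : c * y.1 + (s / ω) * (η.1 - (-b * y.2 / (y.1 ^ 2 + y.2 ^ 2))) = 0 := by
      have := congrArg Prod.fst ht
      simpa [traj, A, hc, hs] using this
    have h2 : c * y.2 + (s / ω) * (η.2 - (b * y.1 / (y.1 ^ 2 + y.2 ^ 2))) = 0 := by
      have := congrArg Prod.snd ht
      simpa [traj, A, hc, hs] using this
    have hsne : s ≠ 0 := by
      intro h0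
      have hc2 : c ^ 2 = 1 := by
        have := Real.sin_sq_add_cos_sq (ω * t)
        rw [← hs, ← hc, h0] at this; nlinarith
      have hcne : c ≠ 0 := by intro h; rw [h] at hc2; norm_num at hc2
      rw [h0] at h1 h2
      simp at h1 h2
      have hy1 : y.1 = 0 := by
        rcases h1 with h | h
        · exact absurd h hcne
        · exact h
      have hy2 : y.2 = 0 := by
        rcases h2 with h | h
        · exact absurd h hcne
        · exact h
      exact hy (Prod.ext hy1 hy2)
    have key : (s / ω) * ((y.1 * η.2 - y.2 * η.1) - b) = 0 := by
      have expand : (s / ω) * (y.1 * (η.2 - b * y.1 / (y.1 ^ 2 + y.2 ^ 2))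
          - y.2 * (η.1 - (-b * y.2 / (y.1 ^ 2 + y.2 ^ 2)))) = 0 := by
        linear_combination y.1 * h2 - y.2 * h1
      have : y.1 * (η.2 - b * y.1 / (y.1 ^ 2 + y.2 ^ 2))
          - y.2 * (η.1 - (-b * y.2 / (y.1 ^ 2 + y.2 ^ 2)))
          = (y.1 * η.2 - y.2 * η.1) - b := by
        field_simp
        ring
      rw [this] at expand
      exact expand
    have hsω : s / ω ≠ 0 := div_ne_zero hsne (ne_of_gt hω)
    have := mul_eq_zero.mp key
    rcases this with h | h
    · exact absurd h hsω
    · simp [wedge]; linarith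
  · intro hw
    set v : ℝ × ℝ := η - A b y with hv
    have hwv : y.1 * v.2 - y.2 * v.1 = 0 := by
      simp only [hv, A, Prod.snd_sub, Prod.fst_sub]
      simp [wedge] at hw
      field_simp
      linear_combination (y.1 ^ 2 + y.2 ^ 2) * hw
    set cc : ℝ := dot y v / normSq2 y with hcc
    have hv1 : v.1 = cc * y.1 := by
      rw [hcc]
      simp only [dot, normSq2]
      field_simp [dot, normSq2, hn]
      linear_combination (-y.2) * hwv
    have hv2 : v.2 = cc * y.2 := by
      rw [hcc]
      simp only [dot, normSq2]
      field_simp [dot, normSq2, hn]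
      linear_combination y.1 * hwv
    -- find t with cos(ωt) + sin(ωt)/ω * cc = 0
    set f : ℝ → ℝ := fun t => Real.cos (ω * t) + Real.sin (ω * t) / ω * cc with hf
    have hcont : Continuous f := by
      apply Continuous.add
      · exact (Real.continuous_cos.comp (continuous_const.mul continuous_id))
      · exact ((Real.continuous_sin.comp (continuous_const.mul continuous_id)).div_const ω).mul continuous_const
    have hle : (0:ℝ) ≤ Real.pi / ω := le_of_lt (div_pos Real.pi_pos hω)
    have hf0 : f 0 = 1 := by simp [hf]
    have hfpi : f (Real.pi / ω) = -1 := by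
      have : ω * (Real.pi / ω) = Real.pi := by field_simp
      simp [hf, this]
    have hiv : (0:ℝ) ∈ Set.Icc (f (Real.pi / ω)) (f 0) := by
      rw [hf0, hfpi]; norm_num
    obtain ⟨t, _, ht⟩ := intermediate_value_Icc' hle hcont.continuousOn hiv
    refine ⟨t, ?_⟩
    have hft : Real.cos (ω * t) + Real.sin (ω * t) / ω * cc = 0 := ht
    apply Prod.ext
    · show Real.cos (ω * t) * y.1 + (Real.sin (ω * t) / ω) * v.1 = 0
      rw [hv1]; linear_combination y.1 * hft
    · show Real.cos (ω * t) * y.2 + (Real.sin (ω * t) / ω) * v.2 = 0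
      rw [hv2]; linear_combination y.2 * hft
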